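/- Let λ > 0, y = (ỹ, 0) with ỹ ∈ ℝ², and Φ ∈ ℂ² with ‖Φ‖² = 3λ/8. Define u = √(3/2)·U_{λ,y} and ψ(x) = U_{λ,y}(x)³·(Φ − c((x − y)/λ)Φ). Then on the closed half-space ℝ³₊ = {x ∈ ℝ³ : x₃ ≥ 0} the pair (u, ψ) satisfies: −Δu = ‖ψ‖²·u and Dψ = u²·ψ at every point of ℝ³₊, and in addition u satisfies the homogeneous Neumann boundary condition ∂u/∂x₃(x̃, 0) = 0 for every x̃ ∈ ℝ². (These are the interior equations and the scalar boundary condition of the boundary blow-up system (1.7) with b = 0, for the explicit boundary bubbles of Corollary 1.3.) -/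

import Mathlib

noncomputable section

/-- Points of Euclidean `ℝ³`. -/
abbrev R3 := EuclideanSpace ℝ (Fin 3)

/-- Points of Euclidean `ℝ²`. -/
abbrev R2 := EuclideanSpace ℝ (Fin 2)

/-- Spinors: `ℂ²` with its standard Hermitian inner product and norm. -/
abbrev Spinor := EuclideanSpace ℂ (Fin 2)

/-- Inclusion of the boundary hyperplane: `x̃ ∈ ℝ² ↦ (x̃, 0) ∈ ℝ³`. -/
def embed (p : R2) : R3 :=
  (WithLp.equiv 2 (Fin 3 → ℝ)).symm ![p 0, p 1, 0]

/-- The standard bubble `U_{λ,y}(x) = (2λ/(λ² + ‖x − y‖²))^(1/2)`. -/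
def bubble (l : ℝ) (y : R3) (x : R3) : ℝ :=
  Real.sqrt (2 * l / (l ^ 2 + ‖x - y‖ ^ 2))

/-- The Euclidean Laplacian `Δu = ∑_{j=1}^3 ∂²u/∂x_j²`. -/
def laplacian (u : R3 → ℝ) (x : R3) : ℝ :=
  ∑ j : Fin 3,
    fderiv ℝ (fun z => fderiv ℝ u z (EuclideanSpace.single j 1)) x (EuclideanSpace.single j 1)

/-- Pauli matrix `σ₁`. -/
def pauli1 : Matrix (Fin 2) (Fin 2) ℂ := !![0, 1; 1, 0]

/-- Pauli matrix `σ₂`. -/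
def pauli2 : Matrix (Fin 2) (Fin 2) ℂ := !![0, -Complex.I; Complex.I, 0]

/-- Pauli matrix `σ₃`. -/
def pauli3 : Matrix (Fin 2) (Fin 2) ℂ := !![1, 0; 0, -1]

/-- Clifford multiplication by `v ∈ ℝ³`: the matrix `c(v) = −i(v₁σ₁ + v₂σ₂ + v₃σ₃)`. -/
def cliffordMatrix (v : R3) : Matrix (Fin 2) (Fin 2) ℂ :=
  (-Complex.I) • ((v 0 : ℂ) • pauli1 + (v 1 : ℂ) • pauli2 + (v 2 : ℂ) • pauli3)

/-- The action of `c(v)` on a spinor. -/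
def cliffordMul (v : R3) (φ : Spinor) : Spinor :=
  (WithLp.equiv 2 (Fin 2 → ℂ)).symm ((cliffordMatrix v).mulVec (WithLp.equiv 2 (Fin 2 → ℂ) φ))

/-- The flat Dirac operator `(Dψ)(x) = ∑_{j=1}^3 c(e_j) ∂ψ/∂x_j(x)`. -/
def Dirac (ψ : R3 → Spinor) (x : R3) : Spinor :=
  ∑ j : Fin 3,
    cliffordMul (EuclideanSpace.single j 1) (fderiv ℝ ψ x (EuclideanSpace.single j 1))

/-- The ground-state scalar `u = √(3/2)·U_{λ,y}`. -/
def groundScalar (l : ℝ) (y : R3) (x : R3) : ℝ :=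
  Real.sqrt (3 / 2) * bubble l y x

/-- The ground-state spinor `ψ(x) = U_{λ,y}(x)³·(Φ − c((x − y)/λ)Φ)`. -/
def groundSpinor (l : ℝ) (y : R3) (Φ : Spinor) (x : R3) : Spinor :=
  (bubble l y x ^ 3 : ℝ) • (Φ - cliffordMul (l⁻¹ • (x - y)) Φ)

/-! ### Auxiliary lemmas: Clifford algebra -/

lemma clif_apply0 (v : R3) (φ : Spinor) :
    cliffordMul v φ 0 = (-Complex.I * v 2) * φ 0 + (-Complex.I * v 0 - v 1) * φ 1 := by
  simp [cliffordMul, cliffordMatrix, pauli1, pauli2, pauli3, Matrix.mulVec, dotProduct,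
    Fin.sum_univ_two]
  linear_combination (↑(v 1) * φ 1) * Complex.I_sq

lemma clif_apply1 (v : R3) (φ : Spinor) :
    cliffordMul v φ 1 = (-Complex.I * v 0 + v 1) * φ 0 + (Complex.I * v 2) * φ 1 := by
  simp [cliffordMul, cliffordMatrix, pauli1, pauli2, pauli3, Matrix.mulVec, dotProduct,
    Fin.sum_univ_two]
  linear_combination (-(↑(v 1) : ℂ) * φ 0) * Complex.I_sq

lemma spinor_ext {w z : Spinor} (h0 : w 0 = z 0) (h1 : w 1 = z 1) : w = z := by
  ext i; fin_cases i <;> assumption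

lemma single_app (j i : Fin 3) : (EuclideanSpace.single j (1:ℝ)) i = if i = j then 1 else 0 :=
  EuclideanSpace.single_apply j 1 i

lemma smul_app (r : ℝ) (w : Spinor) (i : Fin 2) : (r • w) i = (r : ℂ) * w i := by
  simp [Complex.real_smul]

lemma clif_sum (v : R3) (φ : Spinor) :
    cliffordMul v φ = ∑ j : Fin 3, v j • cliffordMul (EuclideanSpace.single j (1:ℝ)) φ := by
  apply spinor_ext <;>
    simp [Fin.sum_univ_three, clif_apply0, clif_apply1, smul_app, single_app] <;> ring

lemma clif_add (v : R3) (φ θ : Spinor) :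
    cliffordMul v (φ + θ) = cliffordMul v φ + cliffordMul v θ := by
  apply spinor_ext <;> simp [clif_apply0, clif_apply1] <;> ring

lemma clif_smul (v : R3) (r : ℝ) (φ : Spinor) :
    cliffordMul v (r • φ) = r • cliffordMul v φ := by
  apply spinor_ext <;> simp [clif_apply0, clif_apply1, smul_app] <;> ring

lemma clif_sub (v : R3) (φ θ : Spinor) :
    cliffordMul v (φ - θ) = cliffordMul v φ - cliffordMul v θ := by
  apply spinor_ext <;> simp [clif_apply0, clif_apply1] <;> ring

lemma clif_smul_vec (r : ℝ) (v : R3) (φ : Spinor) :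
    cliffordMul (r • v) φ = r • cliffordMul v φ := by
  apply spinor_ext <;> simp [clif_apply0, clif_apply1, smul_app] <;> push_cast <;> ring

lemma clif_clif (v : R3) (φ : Spinor) :
    cliffordMul v (cliffordMul v φ) = (-(v 0 ^ 2 + v 1 ^ 2 + v 2 ^ 2) : ℝ) • φ := by
  apply spinor_ext <;> simp [clif_apply0, clif_apply1, smul_app] <;> ring_nf <;>
    simp [Complex.I_sq] <;> ring

lemma clif_trace (φ : Spinor) :
    ∑ j : Fin 3, cliffordMul (EuclideanSpace.single j (1:ℝ))
        (cliffordMul (EuclideanSpace.single j (1:ℝ)) φ) = (-3 : ℝ) • φ := by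
  apply spinor_ext <;>
    simp [Fin.sum_univ_three, clif_apply0, clif_apply1, smul_app, single_app] <;>
    ring_nf <;> simp [Complex.I_sq] <;> ring

lemma spinor_norm_sq (w : Spinor) : ‖w‖ ^ 2 = Complex.normSq (w 0) + Complex.normSq (w 1) := by
  rw [EuclideanSpace.norm_eq, Real.sq_sqrt (by positivity)]
  simp [Fin.sum_univ_two, Complex.sq_norm]

lemma r3_norm_sq (v : R3) : ‖v‖ ^ 2 = v 0 ^ 2 + v 1 ^ 2 + v 2 ^ 2 := by
  rw [EuclideanSpace.norm_eq, Real.sq_sqrt (by positivity)]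
  simp [Fin.sum_univ_three, sq_abs]

lemma clif_norm (v : R3) (φ : Spinor) :
    ‖φ - cliffordMul v φ‖ ^ 2 = (1 + ‖v‖ ^ 2) * ‖φ‖ ^ 2 := by
  rw [spinor_norm_sq, spinor_norm_sq φ, r3_norm_sq]
  simp only [PiLp.sub_apply, clif_apply0, clif_apply1, Complex.normSq_apply,
    Complex.sub_re, Complex.sub_im, Complex.add_re, Complex.add_im, Complex.mul_re,
    Complex.mul_im, Complex.neg_re, Complex.neg_im, Complex.I_re, Complex.I_im,
    Complex.ofReal_re, Complex.ofReal_im]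
  ring

/-! ### Auxiliary lemmas: calculus -/

def qf (y : R3) (z : R3) : ℝ := ∑ i : Fin 3, (z i - y i) ^ 2

lemma qf_nonneg (y z : R3) : 0 ≤ qf y z := Finset.sum_nonneg fun i _ => sq_nonneg _

lemma norm_sub_sq_eq (y z : R3) : ‖z - y‖ ^ 2 = qf y z := by
  rw [EuclideanSpace.norm_eq, Real.sq_sqrt (by positivity)]
  simp [qf, PiLp.sub_apply, sq_abs]

def sf (l : ℝ) (y : R3) (z : R3) : ℝ := Real.sqrt (l ^ 2 + qf y z)

lemma sf_pos {l : ℝ} (y : R3) (hl : 0 < l) (z : R3) : 0 < sf l y z :=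
  Real.sqrt_pos.2 (by have := qf_nonneg y z; positivity)

lemma sf_sq {l : ℝ} (y : R3) (hl : 0 < l) (z : R3) : sf l y z ^ 2 = l ^ 2 + qf y z :=
  Real.sq_sqrt (by have := qf_nonneg y z; positivity)

def Dd (y : R3) (x : R3) : R3 →L[ℝ] ℝ :=
  ∑ i : Fin 3, (2 * (x i - y i)) • (EuclideanSpace.proj (𝕜 := ℝ) i)

lemma Dd_apply (y x v : R3) : Dd y x v = ∑ i : Fin 3, 2 * (x i - y i) * v i := by
  simp [Dd, mul_assoc]

lemma Dd_single (y x : R3) (j : Fin 3) :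
    Dd y x (EuclideanSpace.single j (1:ℝ)) = 2 * (x j - y j) := by
  rw [Dd_apply]
  rw [Fintype.sum_eq_single j]
  · simp
  · intro i hi; simp [EuclideanSpace.single_apply, hi]

lemma hasA (y : R3) (j : Fin 3) (x : R3) :
    HasFDerivAt (fun z : R3 => z j - y j) (EuclideanSpace.proj (𝕜 := ℝ) j) x :=
  (EuclideanSpace.proj (𝕜 := ℝ) j).hasFDerivAt.sub_const (y j)

lemma hasQ (y x : R3) : HasFDerivAt (qf y) (Dd y x) x := by
  have : ∀ j : Fin 3, HasFDerivAt (fun z : R3 => (z j - y j) ^ 2)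
      ((2 * (x j - y j)) • (EuclideanSpace.proj (𝕜 := ℝ) j)) x := by
    intro j
    have h := (hasA y j x).fun_mul (hasA y j x)
    refine (h.congr_fderiv ?_).congr_of_eventuallyEq ?_
    · ext v; simp only [ContinuousLinearMap.add_apply, ContinuousLinearMap.smul_apply, smul_eq_mul]; ring
    · exact Filter.Eventually.of_forall fun z => by beta_reduce; ring
  exact HasFDerivAt.fun_sum (fun j _ => this j)

lemma hasS {l : ℝ} (y : R3) (hl : 0 < l) (x : R3) :
    HasFDerivAt (sf l y) ((1 / (2 * sf l y x)) • Dd y x) x := by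
  have h1 : HasFDerivAt (fun z : R3 => l ^ 2 + qf y z) (Dd y x) x := (hasQ y x).const_add _
  have h2 := Real.hasDerivAt_sqrt (x := l ^ 2 + qf y x)
    (by have := qf_nonneg y x; positivity)
  exact h2.comp_hasFDerivAt x h1

lemma hasInv1 {l : ℝ} (y : R3) (hl : 0 < l) (x : R3) :
    HasFDerivAt (fun z => (sf l y z)⁻¹) ((-1 / (2 * sf l y x ^ 3)) • Dd y x) x := by
  have hs := sf_pos y hl x
  have h := ((hasDerivAt_inv hs.ne').comp_hasFDerivAt x (hasS y hl x))
  refine h.congr_fderiv ?_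
  rw [smul_smul]
  congr 1
  field_simp

lemma hasInv3 {l : ℝ} (y : R3) (hl : 0 < l) (x : R3) :
    HasFDerivAt (fun z => (sf l y z ^ 3)⁻¹) ((-3 / (2 * sf l y x ^ 5)) • Dd y x) x := by
  have hs := sf_pos y hl x
  have hp : HasDerivAt (fun t : ℝ => (t ^ 3)⁻¹) (-(3 * sf l y x ^ 2) / (sf l y x ^ 3) ^ 2)
      (sf l y x) := by
    have := (hasDerivAt_pow 3 (sf l y x)).inv (by positivity)
    simp at this; exact this
  have h := hp.comp_hasFDerivAt x (hasS y hl x)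
  refine h.congr_fderiv ?_
  rw [smul_smul]
  congr 1
  field_simp

lemma bubble_eq {l : ℝ} (y : R3) (hl : 0 < l) (x : R3) :
    bubble l y x = Real.sqrt (2 * l) / sf l y x := by
  rw [bubble, norm_sub_sq_eq, Real.sqrt_div (by linarith), sf]

lemma groundScalar_eq {l : ℝ} (y : R3) (hl : 0 < l) :
    groundScalar l y = fun x => Real.sqrt (3 * l) * (sf l y x)⁻¹ := by
  funext x
  rw [groundScalar, bubble_eq y hl, mul_div_assoc',
    ← Real.sqrt_mul (by norm_num : (0:ℝ) ≤ 3/2), div_eq_mul_inv]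
  norm_num [show (3/2 : ℝ) * (2*l) = 3*l by ring]

lemma hasU {l : ℝ} (y : R3) (hl : 0 < l) (x : R3) :
    HasFDerivAt (groundScalar l y)
      ((-(Real.sqrt (3 * l)) / (2 * sf l y x ^ 3)) • Dd y x) x := by
  rw [groundScalar_eq y hl]
  have h := (hasInv1 y hl x).const_mul (Real.sqrt (3 * l))
  refine h.congr_fderiv ?_
  rw [smul_smul]
  congr 1
  ring

lemma fderiv_u_single {l : ℝ} (y : R3) (hl : 0 < l) (x : R3) (j : Fin 3) :
    fderiv ℝ (groundScalar l y) x (EuclideanSpace.single j (1:ℝ))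
      = -(Real.sqrt (3 * l)) * (x j - y j) / sf l y x ^ 3 := by
  rw [(hasU y hl x).fderiv]
  simp [Dd_single]
  field_simp

lemma lap_term {l : ℝ} (y : R3) (hl : 0 < l) (x : R3) (j : Fin 3) :
    fderiv ℝ (fun z => fderiv ℝ (groundScalar l y) z (EuclideanSpace.single j (1:ℝ))) x
        (EuclideanSpace.single j (1:ℝ))
      = -(Real.sqrt (3 * l)) * ((sf l y x ^ 2 - 3 * (x j - y j) ^ 2) / sf l y x ^ 5) := by
  have hfun : (fun z => fderiv ℝ (groundScalar l y) z (EuclideanSpace.single j (1:ℝ)))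
      = fun z => (-(Real.sqrt (3 * l))) * ((z j - y j) * (sf l y z ^ 3)⁻¹) := by
    funext z
    rw [fderiv_u_single y hl z j]
    field_simp
  rw [hfun]
  have hs := sf_pos y hl x
  have h := (((hasA y j x).fun_mul (hasInv3 y hl x)).const_mul (-(Real.sqrt (3 * l)))).fderiv
  rw [h]
  simp [Dd_single, EuclideanSpace.single_apply]
  field_simp
  ring

/-! ### The spinor field -/

/-- `B = √(2λ)³`, so that `U³ = B / s³`. -/
def Bc (l : ℝ) : ℝ := Real.sqrt (2 * l) ^ 3

lemma bubble_cubed {l : ℝ} (y : R3) (hl : 0 < l) (x : R3) :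
    bubble l y x ^ 3 = Bc l * (sf l y x ^ 3)⁻¹ := by
  rw [bubble_eq y hl, div_pow, Bc, div_eq_mul_inv]

lemma psi_eq {l : ℝ} (y : R3) (Φ : Spinor) (hl : 0 < l) :
    groundSpinor l y Φ = fun z =>
      (Bc l * (sf l y z ^ 3)⁻¹) • Φ +
        ∑ k : Fin 3, (-(l⁻¹ * (z k - y k)) * (Bc l * (sf l y z ^ 3)⁻¹)) •
          cliffordMul (EuclideanSpace.single k (1:ℝ)) Φ := by
  funext z
  rw [groundSpinor, bubble_cubed y hl, clif_sum (l⁻¹ • (z - y)) Φ]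
  simp only [PiLp.smul_apply, PiLp.sub_apply, smul_eq_mul]
  rw [smul_sub, Finset.smul_sum]
  rw [sub_eq_add_neg, ← Finset.sum_neg_distrib]
  congr 1
  refine Finset.sum_congr rfl fun k _ => ?_
  rw [smul_smul, ← neg_smul]
  congr 1
  ring

lemma fderiv_psi_single {l : ℝ} (y : R3) (Φ : Spinor) (hl : 0 < l) (x : R3) (j : Fin 3) :
    fderiv ℝ (groundSpinor l y Φ) x (EuclideanSpace.single j (1:ℝ))
      = (-3 * Bc l * (x j - y j) / sf l y x ^ 5) • Φ
        + (3 * Bc l * (x j - y j) / (l * sf l y x ^ 5)) • cliffordMul (x - y) Φ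
        + (-(Bc l / (l * sf l y x ^ 3))) • cliffordMul (EuclideanSpace.single j (1:ℝ)) Φ := by
  have hs := sf_pos y hl x
  rw [psi_eq y Φ hl]
  have h0 : HasFDerivAt (fun z => (Bc l * (sf l y z ^ 3)⁻¹))
      (Bc l • ((-3 / (2 * sf l y x ^ 5)) • Dd y x)) x := (hasInv3 y hl x).const_mul _
  have h1 : ∀ k : Fin 3, HasFDerivAt (fun z : R3 => -(l⁻¹ * (z k - y k)))
      (-(l⁻¹ • EuclideanSpace.proj (𝕜 := ℝ) k)) x := fun k => ((hasA y k x).const_mul l⁻¹).neg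
  have hk : ∀ k : Fin 3, HasFDerivAt
      (fun z : R3 => -(l⁻¹ * (z k - y k)) * (Bc l * (sf l y z ^ 3)⁻¹))
      ((-(l⁻¹ * (x k - y k))) • (Bc l • ((-3 / (2 * sf l y x ^ 5)) • Dd y x))
        + (Bc l * (sf l y x ^ 3)⁻¹) • (-(l⁻¹ • EuclideanSpace.proj (𝕜 := ℝ) k))) x :=
    fun k => (h1 k).mul h0
  have H := ((h0.smul_const Φ).fun_add (HasFDerivAt.fun_sum (fun k (_ : k ∈ Finset.univ) =>
    (hk k).smul_const (cliffordMul (EuclideanSpace.single k (1:ℝ)) Φ))))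
  rw [H.fderiv]
  simp only [ContinuousLinearMap.add_apply, ContinuousLinearMap.coe_sum', Finset.sum_apply,
    ContinuousLinearMap.smulRight_apply, ContinuousLinearMap.smul_apply,
    ContinuousLinearMap.neg_apply, Dd_single, PiLp.proj_apply, single_app,
    smul_eq_mul]
  have hc : (Bc l * (-3 / (2 * sf l y x ^ 5) * (2 * (x j - y j))))
      = -3 * Bc l * (x j - y j) / sf l y x ^ 5 := by
    field_simp
  rw [hc, add_assoc]
  congr 1
  rw [clif_sum (x - y) Φ, Finset.smul_sum]
  rw [show (-(Bc l / (l * sf l y x ^ 3))) • cliffordMul (EuclideanSpace.single j (1:ℝ)) Φ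
      = ∑ k : Fin 3, (if k = j then
          (-(Bc l / (l * sf l y x ^ 3))) • cliffordMul (EuclideanSpace.single k (1:ℝ)) Φ
        else 0) from by rw [Finset.sum_ite_eq']; simp]
  rw [← Finset.sum_add_distrib]
  refine Finset.sum_congr rfl fun k _ => ?_
  rw [smul_smul]
  split_ifs with h
  · subst h
    rw [← add_smul]
    congr 1
    simp only [PiLp.sub_apply]
    field_simp
  · rw [add_zero]
    congr 1
    simp only [PiLp.sub_apply, if_neg h]
    field_simp
    ring


lemma dirac_psi {l : ℝ} (y : R3) (Φ : Spinor) (hl : 0 < l) (x : R3) :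
    Dirac (groundSpinor l y Φ) x
      = (3 * Bc l * l / sf l y x ^ 5) • Φ
        + (-3 * Bc l / sf l y x ^ 5) • cliffordMul (x - y) Φ := by
  have hs := sf_pos y hl x
  have hsq := sf_sq y hl x
  rw [Dirac]
  have hterm : ∀ j : Fin 3, cliffordMul (EuclideanSpace.single j (1:ℝ))
      (fderiv ℝ (groundSpinor l y Φ) x (EuclideanSpace.single j (1:ℝ)))
      = ((-3 * Bc l / sf l y x ^ 5) • ((x - y) j •
            cliffordMul (EuclideanSpace.single j (1:ℝ)) Φ))
        + ((3 * Bc l / (l * sf l y x ^ 5)) • ((x - y) j •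
            cliffordMul (EuclideanSpace.single j (1:ℝ)) (cliffordMul (x - y) Φ)))
        + ((-(Bc l / (l * sf l y x ^ 3))) •
            cliffordMul (EuclideanSpace.single j (1:ℝ))
              (cliffordMul (EuclideanSpace.single j (1:ℝ)) Φ)) := by
    intro j
    rw [fderiv_psi_single y Φ hl x j, clif_add, clif_add, clif_smul, clif_smul, clif_smul]
    rw [smul_smul, smul_smul]
    congr 2
    · simp only [PiLp.sub_apply]; ring
    · simp only [PiLp.sub_apply]; ring
  simp_rw [hterm]
  rw [Finset.sum_add_distrib, Finset.sum_add_distrib]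
  rw [← Finset.smul_sum, ← Finset.smul_sum, ← Finset.smul_sum]
  rw [← clif_sum (x - y) Φ, ← clif_sum (x - y) (cliffordMul (x - y) Φ), clif_trace]
  rw [clif_clif]
  have hc : (-((x - y) 0 ^ 2 + (x - y) 1 ^ 2 + (x - y) 2 ^ 2) : ℝ) = l ^ 2 - sf l y x ^ 2 := by
    simp only [PiLp.sub_apply]
    rw [hsq]
    simp [qf, Fin.sum_univ_three]
  rw [hc, smul_smul, smul_smul]
  have e1 : (3 * Bc l / (l * sf l y x ^ 5)) * (l ^ 2 - sf l y x ^ 2)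
      = 3 * Bc l * l / sf l y x ^ 5 - 3 * Bc l / (l * sf l y x ^ 3) := by
    field_simp
  have e2 : (-(Bc l / (l * sf l y x ^ 3))) * (-3) = 3 * Bc l / (l * sf l y x ^ 3) := by ring
  rw [e1, e2, sub_smul]
  abel

lemma psi_norm {l : ℝ} (y : R3) (Φ : Spinor) (hl : 0 < l) (hΦ : ‖Φ‖ ^ 2 = 3 * l / 8) (x : R3) :
    ‖groundSpinor l y Φ x‖ ^ 2 = 3 * l ^ 2 / sf l y x ^ 4 := by
  have hs := sf_pos y hl x
  have hsq := sf_sq y hl x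
  have h2l : Real.sqrt (2 * l) ^ 2 = 2 * l := Real.sq_sqrt (by linarith)
  rw [groundSpinor, norm_smul, mul_pow, clif_norm, hΦ]
  rw [norm_smul (l⁻¹) (x - y)]
  rw [mul_pow, norm_sub_sq_eq]
  rw [bubble_eq y hl]
  have hb : ‖bubble l y x ^ 3‖ ^ 2 = ((2 * l) / sf l y x ^ 2) ^ 3 := by
    rw [Real.norm_eq_abs, sq_abs, ← pow_mul, bubble_eq y hl,
      show (3 * 2 : ℕ) = 2 * 3 from rfl, pow_mul, div_pow, h2l]
  rw [Real.norm_eq_abs, sq_abs, ← pow_mul, show (3 * 2 : ℕ) = 2 * 3 from rfl, pow_mul,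
    div_pow, h2l]
  have hq : qf y x = sf l y x ^ 2 - l ^ 2 := by linarith
  rw [hq, Real.norm_eq_abs, sq_abs]
  field_simp
  ring

lemma embed_two (p : R2) : embed p 2 = (0 : ℝ) := by
  simp [embed]

/-- Let `λ > 0`, `y = (ỹ, 0)` with `ỹ ∈ ℝ²`, and `Φ ∈ ℂ²` with `‖Φ‖² = 3λ/8`. On the closed
half-space `{x₃ ≥ 0}` the pair `u = √(3/2)·U_{λ,y}`, `ψ(x) = U_{λ,y}(x)³·(Φ − c((x − y)/λ)Φ)`
satisfies `−Δu = ‖ψ‖²·u` and `Dψ = u²·ψ`, and `u` satisfies the homogeneous Neumann boundary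
condition `∂u/∂x₃(x̃, 0) = 0` for all `x̃ ∈ ℝ²`. -/
theorem groundstate_halfspace (l : ℝ) (hl : 0 < l) (ty : R2) (Φ : Spinor)
    (hΦ : ‖Φ‖ ^ 2 = 3 * l / 8) :
    (∀ x : R3, 0 ≤ x 2 →
        -laplacian (groundScalar l (embed ty)) x
          = ‖groundSpinor l (embed ty) Φ x‖ ^ 2 * groundScalar l (embed ty) x) ∧
      (∀ x : R3, 0 ≤ x 2 →
        Dirac (groundSpinor l (embed ty) Φ) x
          = (groundScalar l (embed ty) x ^ 2 : ℝ) • groundSpinor l (embed ty) Φ x) ∧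
      (∀ p : R2,
        fderiv ℝ (groundScalar l (embed ty)) (embed p) (EuclideanSpace.single 2 1) = 0) := by
  set y := embed ty with hy
  have h3l : Real.sqrt (3 * l) ^ 2 = 3 * l := Real.sq_sqrt (by linarith)
  refine ⟨?_, ?_, ?_⟩
  · -- the scalar equation
    intro x _
    have hs := sf_pos y hl x
    have hsq := sf_sq y hl x
    have hq : qf y x = sf l y x ^ 2 - l ^ 2 := by linarith
    have hlap : laplacian (groundScalar l y) x
        = -(Real.sqrt (3 * l)) * (3 * l ^ 2 / sf l y x ^ 5) := by
      simp only [laplacian, Fin.sum_univ_three]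
      rw [lap_term y hl x 0, lap_term y hl x 1, lap_term y hl x 2]
      have hsum : (x 0 - y 0) ^ 2 + (x 1 - y 1) ^ 2 + (x 2 - y 2) ^ 2 = qf y x := by
        simp [qf, Fin.sum_univ_three]
      linear_combination (3 * Real.sqrt (3 * l) / sf l y x ^ 5) * (hsum.trans hq)
    rw [hlap, psi_norm y Φ hl hΦ x, groundScalar_eq y hl]
    field_simp
  · -- the Dirac equation
    intro x _
    have hs := sf_pos y hl x
    rw [dirac_psi y Φ hl x, groundSpinor, bubble_cubed y hl, clif_smul_vec,
      groundScalar_eq y hl]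
    rw [mul_pow, h3l]
    match_scalars
    · field_simp
    · field_simp
  · -- Neumann boundary condition
    intro p
    rw [show (EuclideanSpace.single 2 1 : R3) = EuclideanSpace.single (2 : Fin 3) (1:ℝ) from rfl,
      fderiv_u_single y hl (embed p) 2]
    rw [embed_two p, hy, embed_two ty]
    simp
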